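/- Let g₁,…,g_m ∈ ℤⁿ and let C := {Σᵢ cᵢ gᵢ : cᵢ ∈ ℚ, cᵢ ≥ 0} ⊆ ℚⁿ be the rational polyhedral cone they generate. Assume C is pointed, i.e., C ∩ (−C) = {0}. Let v ∈ C ∩ ℤⁿ with v ≠ 0. Then the set A := {Σᵢ₌₁ᵏ aᵢ : k ≥ 1, a₁,…,a_k ∈ ℚ with aᵢ > 0, S₁,…,S_k ∈ C ∩ ℤⁿ with Sᵢ ≠ 0, and Σᵢ aᵢ Sᵢ = v} ⊆ ℚ is nonempty and bounded above, and its supremum is attained, i.e., A has a greatest element. -/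

import Mathlib

namespace TotalIndexAux

open Finset

variable {n : ℕ}

/-- rational dot product -/
def dotQ (w x : Fin n → ℚ) : ℚ := ∑ j, w j * x j

lemma dotQ_zero_right (w : Fin n → ℚ) : dotQ w 0 = 0 := by simp [dotQ]

lemma dotQ_add_right (w x y : Fin n → ℚ) : dotQ w (x + y) = dotQ w x + dotQ w y := by
  simp [dotQ, mul_add, Finset.sum_add_distrib]

lemma dotQ_smul_right (w : Fin n → ℚ) (c : ℚ) (x : Fin n → ℚ) :
    dotQ w (c • x) = c * dotQ w x := by
  simp only [dotQ, Pi.smul_apply, smul_eq_mul, Finset.mul_sum]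
  exact Finset.sum_congr rfl fun j _ => by ring

lemma dotQ_sub_right (w x y : Fin n → ℚ) : dotQ w (x - y) = dotQ w x - dotQ w y := by
  simp [dotQ, mul_sub, Finset.sum_sub_distrib]

lemma dotQ_sum_right {ι : Type*} (s : Finset ι) (w : Fin n → ℚ) (x : ι → Fin n → ℚ) :
    dotQ w (∑ i ∈ s, x i) = ∑ i ∈ s, dotQ w (x i) := by
  simp only [dotQ, Finset.sum_apply, Finset.mul_sum]
  exact Finset.sum_comm

lemma dotQ_add_left (w z x : Fin n → ℚ) : dotQ (w + z) x = dotQ w x + dotQ z x := by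
  simp [dotQ, add_mul, Finset.sum_add_distrib]

lemma dotQ_smul_left (c : ℚ) (w x : Fin n → ℚ) : dotQ (c • w) x = c * dotQ w x := by
  simp only [dotQ, Pi.smul_apply, smul_eq_mul, Finset.mul_sum]
  exact Finset.sum_congr rfl fun j _ => by ring

lemma dotQ_self_pos {x : Fin n → ℚ} (hx : x ≠ 0) : 0 < dotQ x x := by
  have hj : ∃ j, x j ≠ 0 := by
    by_contra h; push_neg at h; exact hx (funext h)
  obtain ⟨j, hj⟩ := hj
  refine Finset.sum_pos' (fun i _ => mul_self_nonneg _) ⟨j, Finset.mem_univ j, ?_⟩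
  exact mul_self_pos.mpr hj

lemma exists_gt_finset {ι : Type*} (s : Finset ι) (f : ι → ℚ) : ∃ x : ℚ, ∀ i ∈ s, f i < x := by
  rcases s.eq_empty_or_nonempty with rfl | hs
  · exact ⟨0, by simp⟩
  · obtain ⟨b, hb, hmax⟩ := s.exists_max_image f hs
    exact ⟨f b + 1, fun i hi => lt_of_le_of_lt (hmax i hi) (by linarith)⟩

lemma exists_between_finset {ι : Type*} (s : Finset ι) (f : ι → ℚ) (T : ℚ)
    (h : ∀ i ∈ s, f i < T) : ∃ x : ℚ, x < T ∧ ∀ i ∈ s, f i < x := by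
  rcases s.eq_empty_or_nonempty with rfl | hs
  · exact ⟨T - 1, by linarith, by simp⟩
  · obtain ⟨b, hb, hmax⟩ := s.exists_max_image f hs
    refine ⟨(f b + T) / 2, by have := h b hb; linarith, fun i hi => ?_⟩
    have h1 := hmax i hi
    have h2 := h b hb
    linarith

/-- **Gordan's theorem** over ℚ, by induction on the (finite) family of vectors. -/
lemma gordan {ι : Type*} [DecidableEq ι] (s : Finset ι) (u : ι → Fin n → ℚ) :
    (∃ w : Fin n → ℚ, ∀ i ∈ s, 0 < dotQ w (u i)) ∨
    (∃ y : ι → ℚ, (∀ i, 0 ≤ y i) ∧ (∑ i ∈ s, y i • u i) = 0 ∧ ∃ i ∈ s, 0 < y i) := by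
  classical
  induction s using Finset.induction_on generalizing u with
  | empty => exact Or.inl ⟨0, by simp⟩
  | @insert a s ha ih =>
    rcases ih u with ⟨w, hw⟩ | ⟨y, hy0, hysum, i0, hi0, hyi0⟩
    · -- w is positive on s
      by_cases hmu : 0 < dotQ w (u a)
      · refine Or.inl ⟨w, fun i hi => ?_⟩
        rcases Finset.mem_insert.mp hi with rfl | hi
        · exact hmu
        · exact hw i hi
      push_neg at hmu
      by_cases hua : u a = 0
      · -- u a = 0 : trivial relation
        refine Or.inr ⟨fun i => if i = a then 1 else 0, fun i => by dsimp only; split <;> norm_num,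
          ?_, ⟨a, Finset.mem_insert_self a s, by simp⟩⟩
        rw [Finset.sum_insert ha]
        dsimp only
        rw [if_pos rfl, hua, smul_zero, zero_add]
        apply Finset.sum_eq_zero
        intro i hi
        have hia : i ≠ a := fun h => ha (h ▸ hi)
        simp [hia]
      rcases hmu.eq_or_lt with hmu0 | hmuneg
      · -- dotQ w (u a) = 0, u a ≠ 0 : perturb
        obtain ⟨t, ht⟩ := exists_gt_finset s (fun i => (-(dotQ (u a) (u i))) / dotQ w (u i))
        refine Or.inl ⟨u a + t • w, fun i hi => ?_⟩
        rw [dotQ_add_left, dotQ_smul_left]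
        rcases Finset.mem_insert.mp hi with rfl | hi
        · rw [hmu0, mul_zero, add_zero]
          exact dotQ_self_pos hua
        · have h1 := (div_lt_iff₀ (hw i hi)).mp (ht i hi)
          nlinarith [hw i hi]
      · -- dotQ w (u a) < 0 : project and use IH
        set mu := dotQ w (u a) with hmudef
        rcases ih (fun i => (-mu) • u i + (dotQ w (u i)) • u a) with ⟨z, hz⟩ | ⟨y, hy0, hysum, i0, hi0, hyi0⟩
        · -- found z positive on projected vectors
          have hz' : ∀ i ∈ s, 0 < (-mu) * dotQ z (u i) + dotQ w (u i) * dotQ z (u a) := by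
            intro i hi
            have := hz i hi
            rwa [dotQ_add_right, dotQ_smul_right, dotQ_smul_right] at this
          have hfT : ∀ i ∈ s, (-(dotQ z (u i))) / dotQ w (u i) < dotQ z (u a) / (-mu) := by
            intro i hi
            rw [div_lt_div_iff₀ (hw i hi) (neg_pos.mpr hmuneg)]
            nlinarith [hz' i hi]
          obtain ⟨x, hxT, hx⟩ := exists_between_finset s _ _ hfT
          refine Or.inl ⟨z + x • w, fun i hi => ?_⟩
          rw [dotQ_add_left, dotQ_smul_left]
          rcases Finset.mem_insert.mp hi with rfl | hi
          · have h1 := (lt_div_iff₀ (neg_pos.mpr hmuneg)).mp hxT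
            nlinarith
          · have h1 := (div_lt_iff₀ (hw i hi)).mp (hx i hi)
            nlinarith [hw i hi]
        · -- relation for projected vectors gives relation for original
          refine Or.inr ⟨fun i => if i = a then ∑ j ∈ s, y j * dotQ w (u j) else (-mu) * y i,
            ?_, ?_, ⟨a, Finset.mem_insert_self a s, ?_⟩⟩
          · intro i
            dsimp only
            split
            · exact Finset.sum_nonneg fun j hj => mul_nonneg (hy0 j) (le_of_lt (hw j hj))
            · exact mul_nonneg (by linarith) (hy0 i)
          · rw [Finset.sum_insert ha]
            dsimp only
            rw [if_pos rfl]
            have hterm : ∀ i ∈ s, (if i = a then ∑ j ∈ s, y j * dotQ w (u j) else (-mu) * y i) • u i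
                = ((-mu) * y i) • u i := by
              intro i hi
              have hia : i ≠ a := fun h => ha (h ▸ hi)
              rw [if_neg hia]
            rw [Finset.sum_congr rfl hterm]
            have hsum2 : (∑ i ∈ s, ((-mu) * y i) • u i)
                + (∑ i ∈ s, y i * dotQ w (u i)) • u a = 0 := by
              rw [Finset.sum_smul, ← Finset.sum_add_distrib, ← hysum]
              apply Finset.sum_congr rfl
              intro i hi
              rw [smul_add, smul_smul, smul_smul, mul_comm (y i) (-mu)]
            rw [add_comm]
            exact hsum2
          · dsimp only
            rw [if_pos rfl]
            exact Finset.sum_pos' (fun j hj => mul_nonneg (hy0 j) (le_of_lt (hw j hj)))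
              ⟨i0, hi0, mul_pos hyi0 (hw i0 hi0)⟩
    · -- relation on s extends to insert
      refine Or.inr ⟨fun i => if i = a then 0 else y i,
        fun i => by dsimp only; split; exacts [le_rfl, hy0 i],
        ?_, ⟨i0, Finset.mem_insert_of_mem hi0, ?_⟩⟩
      · rw [Finset.sum_insert ha]
        dsimp only
        rw [if_pos rfl, zero_smul, zero_add]
        rw [Finset.sum_congr rfl (fun i hi => by
          have hia : i ≠ a := fun h => ha (h ▸ hi)
          rw [if_neg hia])]
        exact hysum
      · have hia : i0 ≠ a := fun h => ha (h ▸ hi0)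
        dsimp only
        rw [if_neg hia]
        exact hyi0

/-! ### Cone and LP infrastructure -/

def QV (S : Fin n → ℤ) : Fin n → ℚ := fun j => (S j : ℚ)

def Cgen {m : ℕ} (u : Fin m → Fin n → ℚ) : Set (Fin n → ℚ) :=
  {w | ∃ c : Fin m → ℚ, (∀ i, 0 ≤ c i) ∧ w = ∑ i, c i • u i}

def suppF (HS : Finset (Fin n → ℤ)) (b : (Fin n → ℤ) → ℚ) : Finset (Fin n → ℤ) :=
  HS.filter (fun S => b S ≠ 0)

def Feas (HS : Finset (Fin n → ℤ)) (v : Fin n → ℚ) (b : (Fin n → ℤ) → ℚ) : Prop :=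
  (∀ S, 0 ≤ b S) ∧ (∀ S, b S ≠ 0 → S ∈ HS) ∧ (∑ S ∈ HS, b S • QV S) = v

def IndepOn (T : Finset (Fin n → ℤ)) : Prop :=
  ∀ d : (Fin n → ℤ) → ℚ, (∀ S, d S ≠ 0 → S ∈ T) → (∑ S ∈ T, d S • QV S) = 0 → ∀ S, d S = 0

def valF (HS : Finset (Fin n → ℤ)) (b : (Fin n → ℤ) → ℚ) : ℚ := ∑ S ∈ HS, b S

lemma QV_eq_zero_iff {S : Fin n → ℤ} : QV S = 0 ↔ S = 0 := by
  constructor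
  · intro h
    funext j
    have := congrFun h j
    simpa [QV] using this
  · rintro rfl
    funext j
    simp [QV]

lemma smul_single_mem_Cgen {m : ℕ} (u : Fin m → Fin n → ℚ) (i : Fin m) {t : ℚ} (ht : 0 ≤ t) :
    t • u i ∈ Cgen u := by
  classical
  refine ⟨fun i' => if i' = i then t else 0, fun i' => by dsimp only; split <;> simp [ht], ?_⟩
  rw [Finset.sum_congr rfl (fun i' _ => by rw [ite_smul, zero_smul])]
  rw [Finset.sum_ite_eq' Finset.univ i (fun i' => t • u i')]
  simp

lemma single_mem_Cgen {m : ℕ} (u : Fin m → Fin n → ℚ) (i : Fin m) : u i ∈ Cgen u := by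
  have := smul_single_mem_Cgen u i (zero_le_one)
  rwa [one_smul] at this

/-- key quantitative bound for elements of the cone -/
lemma key_bound {m : ℕ} (u : Fin m → Fin n → ℚ) (w : Fin n → ℚ) (Gb m₀ : ℚ)
    (hGb : ∀ i j, |u i j| ≤ Gb) (hm₀ : ∀ i, u i ≠ 0 → m₀ ≤ dotQ w (u i)) (hm₀0 : 0 ≤ m₀)
    {x : Fin n → ℚ} (hx : x ∈ Cgen u) :
    ∃ t : ℚ, 0 ≤ t ∧ m₀ * t ≤ dotQ w x ∧ ∀ j, |x j| ≤ Gb * t := by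
  classical
  obtain ⟨c, hc0, rfl⟩ := hx
  set s' : Finset (Fin m) := Finset.univ.filter (fun i => u i ≠ 0) with hs'
  refine ⟨∑ i ∈ s', c i, Finset.sum_nonneg fun i _ => hc0 i, ?_, ?_⟩
  · rw [dotQ_sum_right]
    have h1 : ∑ i, dotQ w (c i • u i) = ∑ i ∈ s', c i * dotQ w (u i) := by
      rw [Finset.sum_congr rfl (fun i _ => dotQ_smul_right w (c i) (u i))]
      refine (Finset.sum_subset (Finset.filter_subset _ _) ?_).symm
      intro i _ hi
      have : u i = 0 := by
        by_contra h
        exact hi (Finset.mem_filter.mpr ⟨Finset.mem_univ i, h⟩)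
      rw [this, dotQ_zero_right, mul_zero]
    rw [h1, Finset.mul_sum]
    refine Finset.sum_le_sum fun i hi => ?_
    have hui : u i ≠ 0 := (Finset.mem_filter.mp hi).2
    calc m₀ * c i = c i * m₀ := mul_comm _ _
    _ ≤ c i * dotQ w (u i) := mul_le_mul_of_nonneg_left (hm₀ i hui) (hc0 i)
  · intro j
    have hxj : (∑ i, c i • u i) j = ∑ i ∈ s', c i * u i j := by
      rw [Finset.sum_apply]
      refine (Finset.sum_subset (Finset.filter_subset _ _) ?_).symm
      · intro i _ hi
        have : u i = 0 := by
          by_contra h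
          exact hi (Finset.mem_filter.mpr ⟨Finset.mem_univ i, h⟩)
        simp [this]
    rw [hxj]
    calc |∑ i ∈ s', c i * u i j| ≤ ∑ i ∈ s', |c i * u i j| := Finset.abs_sum_le_sum_abs _ _
    _ ≤ ∑ i ∈ s', Gb * c i := by
        refine Finset.sum_le_sum fun i hi => ?_
        rw [abs_mul, abs_of_nonneg (hc0 i), mul_comm]
        exact mul_le_mul_of_nonneg_right (hGb i j) (hc0 i)
    _ = Gb * ∑ i ∈ s', c i := by rw [Finset.mul_sum]


/-- if the weight of `x ∈ C` exceeds the total weight of the generators, we can subtract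
a generator and stay in the cone -/
lemma exists_sub_mem {m : ℕ} (u : Fin m → Fin n → ℚ) (w : Fin n → ℚ)
    (hw : ∀ i, u i ≠ 0 → 0 < dotQ w (u i))
    {x : Fin n → ℚ} (hx : x ∈ Cgen u)
    (hB : (∑ i ∈ Finset.univ.filter (fun i => u i ≠ 0), dotQ w (u i)) < dotQ w x) :
    ∃ i, u i ≠ 0 ∧ x - u i ∈ Cgen u := by
  classical
  obtain ⟨c, hc0, hxc⟩ := hx
  set s' : Finset (Fin m) := Finset.univ.filter (fun i => u i ≠ 0) with hs'
  have hdx : dotQ w x = ∑ i ∈ s', c i * dotQ w (u i) := by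
    rw [hxc, dotQ_sum_right, Finset.sum_congr rfl (fun i _ => dotQ_smul_right w (c i) (u i))]
    refine (Finset.sum_subset (Finset.filter_subset _ _) ?_).symm
    intro i _ hi
    have : u i = 0 := by
      by_contra h
      exact hi (Finset.mem_filter.mpr ⟨Finset.mem_univ i, h⟩)
    rw [this, dotQ_zero_right, mul_zero]
  have hex : ∃ i ∈ s', 1 ≤ c i := by
    by_contra h
    push_neg at h
    have : dotQ w x ≤ ∑ i ∈ s', dotQ w (u i) := by
      rw [hdx]
      refine Finset.sum_le_sum fun i hi => ?_
      have hui : u i ≠ 0 := (Finset.mem_filter.mp hi).2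
      calc c i * dotQ w (u i) ≤ 1 * dotQ w (u i) :=
            mul_le_mul_of_nonneg_right (le_of_lt (h i hi)) (le_of_lt (hw i hui))
      _ = dotQ w (u i) := one_mul _
    exact absurd hB (not_lt.mpr this)
  obtain ⟨i, hi, hci⟩ := hex
  refine ⟨i, (Finset.mem_filter.mp hi).2, Function.update c i (c i - 1), ?_, ?_⟩
  · intro i'
    rcases eq_or_ne i' i with rfl | h
    · rw [Function.update_self]; linarith
    · rw [Function.update_of_ne h]; exact hc0 i'
  · have h1 : ∑ i', Function.update c i (c i - 1) i' • u i'
        = (c i - 1) • u i + ∑ i' ∈ Finset.univ.erase i, c i' • u i' := by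
      rw [← Finset.add_sum_erase _ _ (Finset.mem_univ i), Function.update_self]
      congr 1
      refine Finset.sum_congr rfl fun i' hi' => ?_
      rw [Function.update_of_ne (Finset.ne_of_mem_erase hi')]
    have h2 : x = c i • u i + ∑ i' ∈ Finset.univ.erase i, c i' • u i' := by
      rw [hxc, ← Finset.add_sum_erase _ _ (Finset.mem_univ i)]
    rw [h1, h2, sub_smul, one_smul]
    abel

/-- every nonzero integer point of the cone decomposes into small nonzero integer points -/
lemma refine_lemma {m : ℕ} (g : Fin m → Fin n → ℤ) (w : Fin n → ℚ) (m₀ B : ℚ)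
    (hm₀pos : 0 < m₀)
    (hm₀ : ∀ i, QV (g i) ≠ 0 → m₀ ≤ dotQ w (QV (g i)))
    (hB : ∀ i, QV (g i) ≠ 0 → dotQ w (QV (g i)) ≤ B)
    (hw : ∀ i, QV (g i) ≠ 0 → 0 < dotQ w (QV (g i)))
    (hBdef : B = ∑ i ∈ Finset.univ.filter (fun i => QV (g i) ≠ 0), dotQ w (QV (g i))) :
    ∀ (N : ℕ) (S : Fin n → ℤ), QV S ∈ Cgen (fun i => QV (g i)) → S ≠ 0 →
      dotQ w (QV S) ≤ B + N * m₀ →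
      ∃ (k : ℕ) (T : Fin k → Fin n → ℤ), 0 < k ∧
        (∀ r, QV (T r) ∈ Cgen (fun i => QV (g i)) ∧ T r ≠ 0 ∧ dotQ w (QV (T r)) ≤ B) ∧
        (∑ r, QV (T r)) = QV S := by
  intro N
  induction N with
  | zero =>
    intro S hSC hS0 hSB
    refine ⟨1, fun _ => S, Nat.one_pos, fun r => ⟨hSC, hS0, by simpa using hSB⟩, ?_⟩
    simp
  | succ N ih =>
    intro S hSC hS0 hSB
    by_cases hsmall : dotQ w (QV S) ≤ B
    · exact ⟨1, fun _ => S, Nat.one_pos, fun r => ⟨hSC, hS0, hsmall⟩, by simp⟩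
    push_neg at hsmall
    obtain ⟨i, hgi0, hsub⟩ := exists_sub_mem (fun i => QV (g i)) w hw hSC (hBdef ▸ hsmall)
    set S' : Fin n → ℤ := fun j => S j - g i j with hS'def
    have hQS' : QV S' = QV S - QV (g i) := by
      funext j
      simp [QV, S']
    have hS'C : QV S' ∈ Cgen (fun i => QV (g i)) := by rw [hQS']; exact hsub
    have hdS' : dotQ w (QV S') = dotQ w (QV S) - dotQ w (QV (g i)) := by
      rw [hQS', dotQ_sub_right]
    have hS'pos : 0 < dotQ w (QV S') := by
      rw [hdS']
      have := hB i hgi0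
      linarith
    have hS'0 : S' ≠ 0 := by
      intro h
      rw [h] at hS'pos
      have : QV (0 : Fin n → ℤ) = 0 := QV_eq_zero_iff.mpr rfl
      rw [this, dotQ_zero_right] at hS'pos
      exact lt_irrefl 0 hS'pos
    have hS'B : dotQ w (QV S') ≤ B + N * m₀ := by
      rw [hdS']
      have h1 := hm₀ i hgi0
      have h2 : ((N : ℚ) + 1) * m₀ = N * m₀ + m₀ := by ring
      push_cast at hSB
      linarith
    obtain ⟨k, T, hk, hT, hTsum⟩ := ih S' hS'C hS'0 hS'B
    refine ⟨k + 1, Fin.cons (g i) T, Nat.succ_pos k, ?_, ?_⟩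
    · intro r
      refine Fin.cases ?_ ?_ r
      · rw [Fin.cons_zero]
        refine ⟨single_mem_Cgen (fun i => QV (g i)) i, ?_, hB i hgi0⟩
        intro h
        exact hgi0 (QV_eq_zero_iff.mpr h)
      · intro r'
        rw [Fin.cons_succ]
        exact hT r'
    · rw [Fin.sum_univ_succ]
      simp only [Fin.cons_zero, Fin.cons_succ]
      rw [hTsum, hQS']
      abel


/-- a decomposition whose pieces refine into `HS` gives a feasible LP point of at
least the same value -/
lemma decomp_to_feas (HS : Finset (Fin n → ℤ)) (v : Fin n → ℚ) (k : ℕ) (a : Fin k → ℚ)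
    (S : Fin k → Fin n → ℤ) (ha : ∀ i, 0 < a i)
    (hdec : ∀ i, ∃ (k' : ℕ) (T : Fin k' → Fin n → ℤ), 0 < k' ∧ (∀ r, T r ∈ HS) ∧
      (∑ r, QV (T r)) = QV (S i))
    (hsum : (∑ i, a i • QV (S i)) = v) :
    ∃ b, Feas HS v b ∧ (∑ i, a i) ≤ valF HS b := by
  classical
  choose k' T hk' hT hTsum using hdec
  set cnt : Fin k → (Fin n → ℤ) → ℚ :=
    fun i X => ((Finset.univ.filter (fun r : Fin (k' i) => T i r = X)).card : ℚ) with hcnt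
  have hcnt0 : ∀ i X, 0 ≤ cnt i X := fun i X => by positivity
  have hcnt_sum : ∀ i X, cnt i X = ∑ r : Fin (k' i), if T i r = X then (1 : ℚ) else 0 := by
    intro i X
    show ((Finset.univ.filter (fun r : Fin (k' i) => T i r = X)).card : ℚ) = _
    rw [Finset.card_filter]
    push_cast
    rfl
  set b : (Fin n → ℤ) → ℚ := fun X => ∑ i, a i * cnt i X with hb
  have hb_supp : ∀ X, b X ≠ 0 → X ∈ HS := by
    intro X hX
    by_contra hXH
    apply hX
    rw [hb]
    refine Finset.sum_eq_zero fun i _ => ?_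
    have : cnt i X = 0 := by
      rw [hcnt_sum]
      refine Finset.sum_eq_zero fun r _ => ?_
      rw [if_neg]
      intro h
      exact hXH (h ▸ hT i r)
    rw [this, mul_zero]
  have hinner : ∀ i, ∑ X ∈ HS, cnt i X • QV X = QV (S i) := by
    intro i
    have h1 : ∀ X ∈ HS, cnt i X • QV X
        = ∑ r : Fin (k' i), if T i r = X then QV X else 0 := by
      intro X _
      rw [hcnt_sum, Finset.sum_smul]
      refine Finset.sum_congr rfl fun r _ => ?_
      split <;> simp
    rw [Finset.sum_congr rfl h1, Finset.sum_comm]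
    rw [← hTsum i]
    refine Finset.sum_congr rfl fun r _ => ?_
    rw [Finset.sum_ite_eq HS (T i r) (fun X => QV X), if_pos (hT i r)]
  have hinner_val : ∀ i, ∑ X ∈ HS, cnt i X = (k' i : ℚ) := by
    intro i
    rw [Finset.sum_congr rfl (fun X _ => hcnt_sum i X), Finset.sum_comm]
    have : ∀ r : Fin (k' i), ∑ X ∈ HS, (if T i r = X then (1:ℚ) else 0) = 1 := by
      intro r
      rw [Finset.sum_ite_eq HS (T i r) (fun _ => (1:ℚ)), if_pos (hT i r)]
    rw [Finset.sum_congr rfl (fun r _ => this r)]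
    simp
  refine ⟨b, ⟨fun X => Finset.sum_nonneg fun i _ => mul_nonneg (le_of_lt (ha i)) (hcnt0 i X),
    hb_supp, ?_⟩, ?_⟩
  · rw [← hsum]
    have h2 : ∀ X ∈ HS, b X • QV X = ∑ i, a i • (cnt i X • QV X) := by
      intro X _
      rw [hb, Finset.sum_smul]
      refine Finset.sum_congr rfl fun i _ => ?_
      rw [mul_smul]
    rw [Finset.sum_congr rfl h2, Finset.sum_comm]
    refine Finset.sum_congr rfl fun i _ => ?_
    rw [← Finset.smul_sum, hinner i]
  · rw [valF]
    have h3 : ∑ X ∈ HS, b X = ∑ i, a i * (k' i : ℚ) := by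
      rw [hb, Finset.sum_comm]
      refine Finset.sum_congr rfl fun i _ => ?_
      rw [← Finset.mul_sum, hinner_val i]
    rw [h3]
    refine Finset.sum_le_sum fun i _ => ?_
    have h4 : (1 : ℚ) ≤ (k' i : ℚ) := by exact_mod_cast hk' i
    nlinarith [ha i]


/-- support reduction: every feasible point is dominated by a feasible point with
independent support -/
lemma lp_improve (HS : Finset (Fin n → ℤ)) (w : Fin n → ℚ) (δ : ℚ) (hδ : 0 < δ)
    (hHS : ∀ S ∈ HS, δ ≤ dotQ w (QV S)) (v : Fin n → ℚ) :
    ∀ (c : ℕ) (b), Feas HS v b → (suppF HS b).card ≤ c →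
      ∃ b', Feas HS v b' ∧ IndepOn (suppF HS b') ∧ valF HS b ≤ valF HS b' := by
  classical
  intro c
  induction c with
  | zero =>
    intro b hb hcard
    refine ⟨b, hb, ?_, le_rfl⟩
    have hempty : suppF HS b = ∅ := Finset.card_eq_zero.mp (Nat.le_zero.mp hcard)
    intro d hd _ S
    by_contra hdS
    have := hd S hdS
    rw [hempty] at this
    exact absurd this (Finset.notMem_empty S)
  | succ c ih =>
    intro b hb hcard
    by_cases hind : IndepOn (suppF HS b)
    · exact ⟨b, hb, hind, le_rfl⟩
    have hviol : ∃ d : (Fin n → ℤ) → ℚ, (∀ S, d S ≠ 0 → S ∈ suppF HS b) ∧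
        (∑ S ∈ suppF HS b, d S • QV S) = 0 ∧ (∃ S₀, d S₀ ≠ 0) ∧
        0 ≤ ∑ S ∈ suppF HS b, d S := by
      rw [IndepOn] at hind
      push_neg at hind
      obtain ⟨d, hd1, hd2, S₀, hdS₀⟩ := hind
      rcases le_or_gt 0 (∑ S ∈ suppF HS b, d S) with h | h
      · exact ⟨d, hd1, hd2, ⟨S₀, hdS₀⟩, h⟩
      · refine ⟨fun S => -(d S), fun S hS => hd1 S (by simpa using hS), ?_,
          ⟨S₀, by simpa using hdS₀⟩, ?_⟩
        · rw [Finset.sum_congr rfl (fun S _ => neg_smul (d S) (QV S)),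
            Finset.sum_neg_distrib, hd2, neg_zero]
        · rw [Finset.sum_neg_distrib]
          linarith
    obtain ⟨d, hdsupp, hdsum, ⟨S₀, hdS₀⟩, hdval⟩ := hviol
    have hsupp_sub : suppF HS b ⊆ HS := Finset.filter_subset _ _
    have hneg : ∃ Sm ∈ suppF HS b, d Sm < 0 := by
      by_contra h
      push_neg at h
      have h0 : dotQ w (∑ S ∈ suppF HS b, d S • QV S) = 0 := by
        rw [hdsum, dotQ_zero_right]
      rw [dotQ_sum_right] at h0
      have hpos : 0 < ∑ S ∈ suppF HS b, dotQ w (d S • QV S) := by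
        refine Finset.sum_pos' ?_ ?_
        · intro S hS
          rw [dotQ_smul_right]
          exact mul_nonneg (h S hS) (le_trans (le_of_lt hδ) (hHS S (hsupp_sub hS)))
        · refine ⟨S₀, hdsupp S₀ hdS₀, ?_⟩
          rw [dotQ_smul_right]
          have hd0 : 0 < d S₀ := lt_of_le_of_ne (h S₀ (hdsupp S₀ hdS₀)) (Ne.symm hdS₀)
          exact mul_pos hd0 (lt_of_lt_of_le hδ (hHS S₀ (hsupp_sub (hdsupp S₀ hdS₀))))
      rw [h0] at hpos
      exact lt_irrefl 0 hpos
    obtain ⟨Sm, hSm, hdSm⟩ := hneg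
    set F := (suppF HS b).filter (fun S => d S < 0) with hF
    have hFne : F.Nonempty := ⟨Sm, Finset.mem_filter.mpr ⟨hSm, hdSm⟩⟩
    obtain ⟨Sstar, hSstar, hmin⟩ := F.exists_min_image (fun S => b S / (-(d S))) hFne
    have hSstar_supp : Sstar ∈ suppF HS b := (Finset.mem_filter.mp hSstar).1
    have hdSstar : d Sstar < 0 := (Finset.mem_filter.mp hSstar).2
    have hbSstar_pos : 0 < b Sstar :=
      lt_of_le_of_ne (hb.1 Sstar) (Ne.symm (Finset.mem_filter.mp hSstar_supp).2)
    set t₀ := b Sstar / (-(d Sstar)) with ht₀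
    have ht₀pos : 0 < t₀ := div_pos hbSstar_pos (neg_pos.mpr hdSstar)
    set b' := fun S => b S + t₀ * d S with hb'
    have hb'0 : ∀ S, 0 ≤ b' S := by
      intro S
      rcases le_or_gt 0 (d S) with h | h
      · have h1 : 0 ≤ t₀ * d S := mul_nonneg (le_of_lt ht₀pos) h
        have h2 := hb.1 S
        show 0 ≤ b S + t₀ * d S
        linarith
      · have hSF : S ∈ F := Finset.mem_filter.mpr ⟨hdsupp S (ne_of_lt h), h⟩
        have hle := hmin S hSF
        rw [le_div_iff₀ (neg_pos.mpr h)] at hle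
        show 0 ≤ b S + t₀ * d S
        nlinarith
    have hb'supp : ∀ S, b' S ≠ 0 → S ∈ suppF HS b := by
      intro S hS
      by_contra h
      have h1 : b S = 0 := by
        by_contra hb0
        exact h (Finset.mem_filter.mpr ⟨hb.2.1 S hb0, hb0⟩)
      have h2 : d S = 0 := by
        by_contra hd0
        exact h (hdsupp S hd0)
      apply hS
      show b S + t₀ * d S = 0
      rw [h1, h2, mul_zero, add_zero]
    have hdsumHS : (∑ S ∈ HS, d S • QV S) = 0 := by
      rw [← hdsum]
      symm
      refine Finset.sum_subset hsupp_sub fun S _ hS => ?_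
      have : d S = 0 := by
        by_contra hd0
        exact hS (hdsupp S hd0)
      rw [this, zero_smul]
    have hdvalHS : 0 ≤ ∑ S ∈ HS, d S := by
      have : (∑ S ∈ suppF HS b, d S) = ∑ S ∈ HS, d S := by
        refine Finset.sum_subset hsupp_sub fun S _ hS => ?_
        by_contra hd0
        exact hS (hdsupp S hd0)
      linarith [hdval, this ▸ hdval]
    have hb'feas : Feas HS v b' := by
      refine ⟨hb'0, fun S h => hsupp_sub (hb'supp S h), ?_⟩
      have h1 : (∑ S ∈ HS, b' S • QV S)
          = (∑ S ∈ HS, b S • QV S) + t₀ • (∑ S ∈ HS, d S • QV S) := by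
        rw [Finset.smul_sum, ← Finset.sum_add_distrib]
        refine Finset.sum_congr rfl fun S _ => ?_
        show (b S + t₀ * d S) • QV S = _
        rw [add_smul, mul_smul]
      rw [h1, hdsumHS, smul_zero, add_zero]
      exact hb.2.2
    have hval' : valF HS b ≤ valF HS b' := by
      have h1 : valF HS b' = valF HS b + t₀ * ∑ S ∈ HS, d S := by
        rw [valF, valF, Finset.mul_sum, ← Finset.sum_add_distrib]
      rw [h1]
      nlinarith
    have hb'Sstar : b' Sstar = 0 := by
      show b Sstar + (b Sstar / -(d Sstar)) * d Sstar = 0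
      have hd : -(d Sstar) ≠ 0 := ne_of_gt (neg_pos.mpr hdSstar)
      field_simp
      rw [div_self (ne_of_lt hdSstar)]; ring
    have hsub0 : suppF HS b' ⊆ suppF HS b :=
      fun S hS => hb'supp S (Finset.mem_filter.mp hS).2
    have hssub : suppF HS b' ⊂ suppF HS b := by
      rw [Finset.ssubset_iff_of_subset hsub0]
      refine ⟨Sstar, hSstar_supp, ?_⟩
      intro hmem
      exact (Finset.mem_filter.mp hmem).2 hb'Sstar
    have hcard' : (suppF HS b').card ≤ c :=
      Nat.lt_succ_iff.mp (lt_of_lt_of_le (Finset.card_lt_card hssub) hcard)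
    obtain ⟨b'', hb''f, hb''ind, hval''⟩ := ih b' hb'feas hcard'
    exact ⟨b'', hb''f, hb''ind, le_trans hval' hval''⟩

/-- there are only finitely many basic feasible points -/
lemma lp_basic_finite (HS : Finset (Fin n → ℤ)) (v : Fin n → ℚ) :
    {b | Feas HS v b ∧ IndepOn (suppF HS b)}.Finite := by
  classical
  have hinj : Set.InjOn (suppF HS) {b | Feas HS v b ∧ IndepOn (suppF HS b)} := by
    rintro b₁ ⟨hf₁, hi₁⟩ b₂ ⟨hf₂, _⟩ hsupp
    have hext : ∀ (b : (Fin n → ℤ) → ℚ), Feas HS v b →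
        (∑ S ∈ suppF HS b, b S • QV S) = v := by
      intro b hb
      rw [← hb.2.2]
      refine Finset.sum_subset (Finset.filter_subset _ _) fun S hS hS' => ?_
      have : b S = 0 := by
        by_contra h
        exact hS' (Finset.mem_filter.mpr ⟨hS, h⟩)
      rw [this, zero_smul]
    have hd := hi₁ (fun S => b₁ S - b₂ S) ?_ ?_
    · funext S
      have h : b₁ S - b₂ S = 0 := hd S
      linarith
    · intro S hS
      rcases ne_or_eq (b₁ S) 0 with h | h
      · exact Finset.mem_filter.mpr ⟨hf₁.2.1 S h, h⟩
      · have h2 : b₂ S ≠ 0 := by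
          intro h2
          apply hS
          show b₁ S - b₂ S = 0
          rw [h, h2, sub_zero]
        rw [hsupp]
        exact Finset.mem_filter.mpr ⟨hf₂.2.1 S h2, h2⟩
    · have h1 := hext b₁ hf₁
      have h2 := hext b₂ hf₂
      rw [hsupp] at *
      have h3 : (∑ S ∈ suppF HS b₂, (b₁ S - b₂ S) • QV S)
          = (∑ S ∈ suppF HS b₂, b₁ S • QV S) - ∑ S ∈ suppF HS b₂, b₂ S • QV S := by
        rw [← Finset.sum_sub_distrib]
        refine Finset.sum_congr rfl fun S _ => ?_
        rw [sub_smul]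
      rw [h3, h1, h2, sub_self]
  have himg : ((suppF HS) '' {b | Feas HS v b ∧ IndepOn (suppF HS b)}).Finite := by
    apply Set.Finite.subset (HS.powerset : Finset (Finset (Fin n → ℤ))).finite_toSet
    rintro T ⟨b, _, rfl⟩
    rw [Finset.mem_coe, Finset.mem_powerset]
    exact Finset.filter_subset _ _
  exact Set.Finite.of_finite_image himg hinj

/-- a feasible point gives a decomposition of `v` of the same value -/
lemma feas_to_decomp (HS : Finset (Fin n → ℤ)) (v : Fin n → ℚ) (hv : v ≠ 0)
    (b : (Fin n → ℤ) → ℚ) (hb : Feas HS v b) :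
    ∃ (k : ℕ) (a : Fin k → ℚ) (S : Fin k → Fin n → ℤ), 0 < k ∧ (∀ i, 0 < a i) ∧
      (∀ i, S i ∈ HS) ∧ (∑ i, a i • QV (S i)) = v ∧ (∑ i, a i) = valF HS b := by
  classical
  set F := suppF HS b with hFdef
  have hFsub : F ⊆ HS := Finset.filter_subset _ _
  have hFne : F.Nonempty := by
    by_contra h
    rw [Finset.not_nonempty_iff_eq_empty] at h
    apply hv
    rw [← hb.2.2]
    refine Finset.sum_eq_zero fun S hS => ?_
    have hb0 : b S = 0 := by
      by_contra h0
      have hmem : S ∈ F := Finset.mem_filter.mpr ⟨hS, h0⟩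
      rw [h] at hmem
      exact absurd hmem (Finset.notMem_empty S)
    rw [hb0, zero_smul]
  set e := F.equivFin with he
  refine ⟨F.card, fun i => b ((e.symm i : F) : Fin n → ℤ),
    fun i => ((e.symm i : F) : Fin n → ℤ), Finset.card_pos.mpr hFne, ?_, ?_, ?_, ?_⟩
  · intro i
    have hmem : ((e.symm i : F) : Fin n → ℤ) ∈ F := (e.symm i).2
    exact lt_of_le_of_ne (hb.1 _) (Ne.symm (Finset.mem_filter.mp hmem).2)
  · intro i
    exact hFsub (e.symm i).2
  · have h1 : (∑ i : Fin F.card, b ((e.symm i : F) : Fin n → ℤ) • QV ((e.symm i : F) : Fin n → ℤ))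
        = ∑ S ∈ F, b S • QV S := by
      rw [← Finset.sum_coe_sort F (fun S => b S • QV S)]
      exact Equiv.sum_comp e.symm (fun x : F => b (x : Fin n → ℤ) • QV (x : Fin n → ℤ))
    rw [h1, ← hb.2.2]
    refine Finset.sum_subset hFsub fun S hS hS' => ?_
    have : b S = 0 := by
      by_contra h
      exact hS' (Finset.mem_filter.mpr ⟨hS, h⟩)
    rw [this, zero_smul]
  · have h1 : (∑ i : Fin F.card, b ((e.symm i : F) : Fin n → ℤ)) = ∑ S ∈ F, b S := by
      rw [← Finset.sum_coe_sort F (fun S => b S)]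
      exact Equiv.sum_comp e.symm (fun x : F => b (x : Fin n → ℤ))
    rw [h1, valF]
    refine Finset.sum_subset hFsub fun S hS hS' => ?_
    by_contra h
    exact hS' (Finset.mem_filter.mpr ⟨hS, h⟩)

end TotalIndexAux
theorem totalIndex_sup_attained (n m : ℕ) (g : Fin m → Fin n → ℤ)
    (C : Set (Fin n → ℚ))
    (hC : C = {w | ∃ c : Fin m → ℚ, (∀ i, 0 ≤ c i) ∧
      w = ∑ i, c i • (fun j => ((g i j : ℚ)))})
    (hpointed : C ∩ (-C) = {0})
    (v : Fin n → ℤ) (hv : v ≠ 0) (hvC : (fun j => ((v j : ℚ))) ∈ C)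
    (A : Set ℚ)
    (hA : A = {s | ∃ k : ℕ, 1 ≤ k ∧ ∃ (a : Fin k → ℚ) (S : Fin k → Fin n → ℤ),
      (∀ i, 0 < a i) ∧ (∀ i, S i ≠ 0) ∧
      (∀ i, (fun j => ((S i j : ℚ))) ∈ C) ∧
      (∑ i, a i • (fun j => ((S i j : ℚ)))) = (fun j => ((v j : ℚ))) ∧
      s = ∑ i, a i}) :
    A.Nonempty ∧ BddAbove A ∧ ∃ t, IsGreatest A t := by
  classical
  open TotalIndexAux in
  subst hC hA
  -- basic coercions
  have hvCC : QV v ∈ Cgen (fun i => QV (g i)) := hvC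
  have hpt : Cgen (fun i => QV (g i)) ∩ (-(Cgen (fun i => QV (g i)))) = {0} := hpointed
  have hvQ0 : QV v ≠ 0 := fun h => hv (QV_eq_zero_iff.mp h)
  -- Step 1 : Gordan gives a strictly positive functional
  set sg : Finset (Fin m) := Finset.univ.filter (fun i => QV (g i) ≠ 0) with hsg
  rcases gordan sg (fun i => QV (g i)) with ⟨w, hw⟩ | ⟨y, hy0, hysum, i₀, hi₀, hyi₀⟩
  swap
  · -- the relation alternative contradicts pointedness
    exfalso
    have hgi₀ : QV (g i₀) ≠ 0 := (Finset.mem_filter.mp hi₀).2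
    have hx1 : y i₀ • QV (g i₀) ∈ Cgen (fun i => QV (g i)) :=
      smul_single_mem_Cgen (fun i => QV (g i)) i₀ (hy0 i₀)
    have h0 : y i₀ • QV (g i₀) + ∑ i ∈ sg.erase i₀, y i • QV (g i) = 0 := by
      rw [Finset.add_sum_erase sg (fun i => y i • QV (g i)) hi₀]
      exact hysum
    have hx2 : -(y i₀ • QV (g i₀)) = ∑ i ∈ sg.erase i₀, y i • QV (g i) := by
      linear_combination -h0
    have hx3 : -(y i₀ • QV (g i₀)) ∈ Cgen (fun i => QV (g i)) := by
      refine ⟨fun i => if i ∈ sg.erase i₀ then y i else 0,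
        fun i => by dsimp only; split; exacts [hy0 i, le_rfl], ?_⟩
      rw [Finset.sum_congr rfl (fun i _ => by rw [ite_smul, zero_smul] :
        ∀ i ∈ Finset.univ, (if i ∈ sg.erase i₀ then y i else 0) • QV (g i)
          = if i ∈ sg.erase i₀ then y i • QV (g i) else 0)]
      rw [Finset.sum_ite_mem Finset.univ (sg.erase i₀) (fun i => y i • QV (g i)),
        Finset.univ_inter]
      exact hx2
    have hmem : y i₀ • QV (g i₀) ∈ Cgen (fun i => QV (g i)) ∩ (-(Cgen (fun i => QV (g i)))) :=
      ⟨hx1, Set.mem_neg.mpr hx3⟩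
    rw [hpt, Set.mem_singleton_iff] at hmem
    rcases smul_eq_zero.mp hmem with h | h
    · exact (ne_of_gt hyi₀) h
    · exact hgi₀ h
  -- Step 2 : constants
  have hw' : ∀ i, QV (g i) ≠ 0 → 0 < dotQ w (QV (g i)) :=
    fun i hi => hw i (Finset.mem_filter.mpr ⟨Finset.mem_univ i, hi⟩)
  have hsgne : sg.Nonempty := by
    by_contra h
    rw [Finset.not_nonempty_iff_eq_empty] at h
    obtain ⟨c, hc0, hcv⟩ := hvCC
    apply hvQ0
    rw [hcv]
    refine Finset.sum_eq_zero fun i _ => ?_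
    show c i • QV (g i) = 0
    have hui : QV (g i) = 0 := by
      by_contra h'
      have hmem : i ∈ sg := Finset.mem_filter.mpr ⟨Finset.mem_univ i, h'⟩
      rw [h] at hmem
      exact absurd hmem (Finset.notMem_empty i)
    rw [hui, smul_zero]
  set m₀ : ℚ := sg.inf' hsgne (fun i => dotQ w (QV (g i))) with hm₀def
  have hm₀pos : 0 < m₀ := by
    rw [hm₀def, Finset.lt_inf'_iff]
    exact fun i hi => hw i hi
  have hm₀le : ∀ i, QV (g i) ≠ 0 → m₀ ≤ dotQ w (QV (g i)) :=
    fun i hi => Finset.inf'_le _ (Finset.mem_filter.mpr ⟨Finset.mem_univ i, hi⟩)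
  set B : ℚ := ∑ i ∈ sg, dotQ w (QV (g i)) with hBdef
  have hBle : ∀ i, QV (g i) ≠ 0 → dotQ w (QV (g i)) ≤ B := by
    intro i hi
    exact Finset.single_le_sum (fun j hj => le_of_lt (hw j hj))
      (Finset.mem_filter.mpr ⟨Finset.mem_univ i, hi⟩)
  set Gb : ℚ := 1 + ∑ i, ∑ j, |QV (g i) j| with hGbdef
  have habs0 : (0:ℚ) ≤ ∑ i, ∑ j, |QV (g i) j| :=
    Finset.sum_nonneg fun i _ => Finset.sum_nonneg fun j _ => abs_nonneg _
  have hGbpos : 0 < Gb := by rw [hGbdef]; linarith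
  have hGble : ∀ i j, |QV (g i) j| ≤ Gb := by
    intro i j
    have h1 : |QV (g i) j| ≤ ∑ j', |QV (g i) j'| :=
      Finset.single_le_sum (f := fun j' => |QV (g i) j'|) (fun _ _ => abs_nonneg _)
        (Finset.mem_univ j)
    have h2 : (∑ j', |QV (g i) j'|) ≤ ∑ i', ∑ j', |QV (g i') j'| :=
      Finset.single_le_sum (f := fun i' => ∑ j', |QV (g i') j'|)
        (fun i' _ => Finset.sum_nonneg fun _ _ => abs_nonneg _) (Finset.mem_univ i)
    rw [hGbdef]
    linarith
  -- Step 3 : uniform lower bound on nonzero integer points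
  set δ : ℚ := m₀ / Gb with hδdef
  have hδpos : 0 < δ := div_pos hm₀pos hGbpos
  have hint : ∀ S : Fin n → ℤ, QV S ∈ Cgen (fun i => QV (g i)) → S ≠ 0 →
      δ ≤ dotQ w (QV S) := by
    intro S hSC hS0
    obtain ⟨t, ht0, htd, htj⟩ := key_bound (fun i => QV (g i)) w Gb m₀ hGble hm₀le
      (le_of_lt hm₀pos) hSC
    obtain ⟨j, hj⟩ : ∃ j, S j ≠ 0 := by
      by_contra h
      push_neg at h
      exact hS0 (funext h)
    have h1 : (1:ℚ) ≤ |QV S j| := by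
      have h2 : (1:ℤ) ≤ |S j| := Int.one_le_abs hj
      have h3 : |QV S j| = ((|S j| : ℤ) : ℚ) := by
        rw [Int.cast_abs]
        rfl
      rw [h3]
      exact_mod_cast h2
    have h2 : 1 ≤ Gb * t := le_trans h1 (htj j)
    have h3 : 1 / Gb ≤ t := by
      rw [div_le_iff₀ hGbpos]
      linarith
    calc δ = m₀ * (1 / Gb) := by rw [hδdef, mul_one_div]
    _ ≤ m₀ * t := mul_le_mul_of_nonneg_left h3 (le_of_lt hm₀pos)
    _ ≤ dotQ w (QV S) := htd
  -- Step 4 : the finite set of small integer points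
  set M : ℤ := ⌈Gb * (B / m₀)⌉ with hM
  set HS : Finset (Fin n → ℤ) := (Finset.Icc (fun _ => -M) (fun _ => M)).filter
    (fun S => QV S ∈ Cgen (fun i => QV (g i)) ∧ S ≠ 0 ∧ dotQ w (QV S) ≤ B) with hHSdef
  have hHSmem : ∀ S : Fin n → ℤ, QV S ∈ Cgen (fun i => QV (g i)) → S ≠ 0 →
      dotQ w (QV S) ≤ B → S ∈ HS := by
    intro S h1 h2 h3
    refine Finset.mem_filter.mpr ⟨?_, h1, h2, h3⟩
    rw [Finset.mem_Icc]
    obtain ⟨t, ht0, htd, htj⟩ := key_bound (fun i => QV (g i)) w Gb m₀ hGble hm₀le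
      (le_of_lt hm₀pos) h1
    have hjb : ∀ j, |(S j : ℚ)| ≤ (M : ℚ) := by
      intro j
      have htB : t ≤ B / m₀ := by
        rw [le_div_iff₀ hm₀pos]
        linarith
      have hc : |(S j : ℚ)| ≤ Gb * (B / m₀) := by
        calc |(S j : ℚ)| = |QV S j| := rfl
        _ ≤ Gb * t := htj j
        _ ≤ Gb * (B / m₀) := mul_le_mul_of_nonneg_left htB (le_of_lt hGbpos)
      exact le_trans hc (Int.le_ceil _)
    have hjb' : ∀ j, |S j| ≤ M := by
      intro j
      have := hjb j
      rw [← Int.cast_abs] at this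
      exact_mod_cast this
    constructor
    · intro j
      have := (abs_le.mp (hjb' j)).1
      simpa using this
    · intro j
      exact (abs_le.mp (hjb' j)).2
  have hHSelem : ∀ S ∈ HS, QV S ∈ Cgen (fun i => QV (g i)) ∧ S ≠ 0 ∧ dotQ w (QV S) ≤ B :=
    fun S hS => (Finset.mem_filter.mp hS).2
  have hHSpos : ∀ S ∈ HS, δ ≤ dotQ w (QV S) :=
    fun S hS => hint S (hHSelem S hS).1 (hHSelem S hS).2.1
  -- Step 5 : refinement into HS
  have hrefine : ∀ S : Fin n → ℤ, QV S ∈ Cgen (fun i => QV (g i)) → S ≠ 0 →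
      ∃ (k : ℕ) (T : Fin k → Fin n → ℤ), 0 < k ∧ (∀ r, T r ∈ HS) ∧
        (∑ r, QV (T r)) = QV S := by
    intro S hSC hS0
    obtain ⟨N, hN⟩ := exists_nat_ge ((dotQ w (QV S) - B) / m₀)
    have hSB : dotQ w (QV S) ≤ B + N * m₀ := by
      rw [div_le_iff₀ hm₀pos] at hN
      linarith
    obtain ⟨k, T, hk, hT, hTsum⟩ := refine_lemma g w m₀ B hm₀pos hm₀le hBle hw' hBdef
      N S hSC hS0 hSB
    exact ⟨k, T, hk, fun r => hHSmem (T r) (hT r).1 (hT r).2.1 (hT r).2.2, hTsum⟩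
  -- Step 6 : the LP over HS
  have hfeas_ex : ∃ b, Feas HS (QV v) b := by
    obtain ⟨b, hbf, _⟩ := decomp_to_feas HS (QV v) 1 (fun _ => 1) (fun _ => v)
      (fun _ => one_pos) (fun _ => hrefine v hvCC hv) (by simp)
    exact ⟨b, hbf⟩
  have hBfin : {b | Feas HS (QV v) b ∧ IndepOn (suppF HS b)}.Finite :=
    lp_basic_finite HS (QV v)
  have hBne : {b | Feas HS (QV v) b ∧ IndepOn (suppF HS b)}.Nonempty := by
    obtain ⟨b, hbf⟩ := hfeas_ex
    obtain ⟨b', hb'f, hb'i, _⟩ := lp_improve HS w δ hδpos hHSpos (QV v)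
      (suppF HS b).card b hbf le_rfl
    exact ⟨b', hb'f, hb'i⟩
  -- maximum of the finitely many basic values
  obtain ⟨t, htV, htmax⟩ : ∃ t ∈ (valF HS) '' {b | Feas HS (QV v) b ∧ IndepOn (suppF HS b)},
      ∀ x ∈ (valF HS) '' {b | Feas HS (QV v) b ∧ IndepOn (suppF HS b)}, x ≤ t := by
    have hVfin := hBfin.image (valF HS)
    have hVne := hBne.image (valF HS)
    obtain ⟨t0, ht0⟩ := hVne
    obtain ⟨t, ht, hmax⟩ := hVfin.toFinset.exists_max_image id
      ⟨t0, (Set.Finite.mem_toFinset hVfin).mpr ht0⟩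
    refine ⟨t, (Set.Finite.mem_toFinset hVfin).mp ht, fun x hx => ?_⟩
    exact hmax x ((Set.Finite.mem_toFinset hVfin).mpr hx)
  -- upper bound property
  have hub : ∀ x ∈ {s | ∃ k : ℕ, 1 ≤ k ∧ ∃ (a : Fin k → ℚ) (S : Fin k → Fin n → ℤ),
      (∀ i, 0 < a i) ∧ (∀ i, S i ≠ 0) ∧
      (∀ i, (fun j => ((S i j : ℚ))) ∈ {w | ∃ c : Fin m → ℚ, (∀ i, 0 ≤ c i) ∧
        w = ∑ i, c i • (fun j => ((g i j : ℚ)))}) ∧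
      (∑ i, a i • (fun j => ((S i j : ℚ)))) = (fun j => ((v j : ℚ))) ∧
      s = ∑ i, a i}, x ≤ t := by
    rintro x ⟨k, hk, a, S, ha, hS0, hSC, hsum, hxval⟩
    have hSC' : ∀ i, QV (S i) ∈ Cgen (fun i => QV (g i)) := fun i => hSC i
    have hsum' : (∑ i, a i • QV (S i)) = QV v := hsum
    obtain ⟨b, hbf, hble⟩ := decomp_to_feas HS (QV v) k a S ha
      (fun i => hrefine (S i) (hSC' i) (hS0 i)) hsum'
    obtain ⟨b', hb'f, hb'i, hble'⟩ := lp_improve HS w δ hδpos hHSpos (QV v)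
      (suppF HS b).card b hbf le_rfl
    have hmem : valF HS b' ∈ (valF HS) '' {b | Feas HS (QV v) b ∧ IndepOn (suppF HS b)} :=
      ⟨b', ⟨hb'f, hb'i⟩, rfl⟩
    calc x = ∑ i, a i := hxval
    _ ≤ valF HS b := hble
    _ ≤ valF HS b' := hble'
    _ ≤ t := htmax _ hmem
  -- t is attained
  have hmemA : t ∈ {s | ∃ k : ℕ, 1 ≤ k ∧ ∃ (a : Fin k → ℚ) (S : Fin k → Fin n → ℤ),
      (∀ i, 0 < a i) ∧ (∀ i, S i ≠ 0) ∧
      (∀ i, (fun j => ((S i j : ℚ))) ∈ {w | ∃ c : Fin m → ℚ, (∀ i, 0 ≤ c i) ∧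
        w = ∑ i, c i • (fun j => ((g i j : ℚ)))}) ∧
      (∑ i, a i • (fun j => ((S i j : ℚ)))) = (fun j => ((v j : ℚ))) ∧
      s = ∑ i, a i} := by
    obtain ⟨b, ⟨hbf, hbi⟩, hbv⟩ := htV
    obtain ⟨k, a, S, hk, ha, hSH, hsum, hval⟩ := feas_to_decomp HS (QV v) hvQ0 b hbf
    refine ⟨k, hk, a, S, ha, fun i => (hHSelem (S i) (hSH i)).2.1,
      fun i => (hHSelem (S i) (hSH i)).1, hsum, ?_⟩
    rw [← hbv, ← hval]
  exact ⟨⟨t, hmemA⟩, ⟨t, hub⟩, t, hmemA, hub⟩
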